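/- arXiv:1407.7110 — 3 statements merged into one kernel-verified Lean document; each statement's English description precedes it below -/
import Mathlib

section
/- In the special case where the '0' block is empty (E = E+), define W(s) := R+^{-1}(Q++ − s·D+) for an invertible diagonal R+ with positive entries, a subgenerator Q++ (off-diagonal nonnegative, eigenvalues with negative real part), and diagonal D+ with nonnegative entries. Then for every s ≥ 0, all eigenvalues of W(s) have negative real part; in particular W(s) is invertible. -/
open Matrix Filter
open scoped ENNReal NNReal

attribute [local instance] Matrix.linftyOpNormedAddCommGroup Matrix.linftyOpNormedSpace
  Matrix.linftyOpNormedRing Matrix.linftyOpNormedAlgebra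

/-- A Metzler matrix whose eigenvalues all have negative real part cannot have a
nonzero nonnegative vector `u` with `Q u ≥ 0`. -/
lemma metzler_no_subinvariant (n : ℕ) (Q : Matrix (Fin n) (Fin n) ℝ)
    (hoff : ∀ i j, i ≠ j → 0 ≤ Q i j)
    (hspec : ∀ μ ∈ spectrum ℂ (Q.map Complex.ofReal), μ.re < 0)
    (u : Fin n → ℝ) (hu0 : ∀ i, 0 ≤ u i) (i0 : Fin n) (hi0 : 0 < u i0)
    (himax : ∀ j, u j ≤ u i0)
    (hQu : ∀ i, 0 ≤ Q.mulVec u i) : False := by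
  haveI : Nonempty (Fin n) := ⟨i0⟩
  classical
  set Mq : Matrix (Fin n) (Fin n) ℂ := Q.map Complex.ofReal with hMq
  -- choose the shift constant c
  have hfin : (spectrum ℂ Mq).Finite := Matrix.finite_spectrum Mq
  obtain ⟨B, hB⟩ := (hfin.image (fun μ : ℂ => Complex.normSq μ / (-(2 * μ.re)))).bddAbove
  obtain ⟨B2, hB2⟩ := (Set.finite_range (fun i => -Q i i)).bddAbove
  set c : ℝ := max (max B B2) 0 + 1 with hc
  have hc_pos : 0 < c := by positivity
  have hcdiag : ∀ i, 0 ≤ Q i i + c := by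
    intro i
    have h2 : B2 ≤ c - 1 := by
      simp only [hc, add_sub_cancel_right]
      exact le_trans (le_max_right B B2) (le_max_left _ 0)
    have h3 : -Q i i ≤ c - 1 := le_trans (hB2 ⟨i, rfl⟩) h2
    linarith
  have hcspec : ∀ μ ∈ spectrum ℂ Mq, ‖μ + c‖ < c := by
    intro μ hμ
    have hre : μ.re < 0 := hspec μ hμ
    have h1 : Complex.normSq μ / (-(2 * μ.re)) ≤ B := hB ⟨μ, hμ, rfl⟩
    have h2 : Complex.normSq μ / (-(2 * μ.re)) ≤ c - 1 := by
      refine h1.trans ?_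
      simp only [hc, add_sub_cancel_right]
      exact le_trans (le_max_left B B2) (le_max_left _ 0)
    have hden : 0 < -(2 * μ.re) := by linarith
    have h3 : Complex.normSq μ ≤ (c - 1) * (-(2 * μ.re)) := by
      rw [div_le_iff₀ hden] at h2; exact h2
    have h4 : Complex.normSq (μ + c) < c ^ 2 := by
      have : Complex.normSq (μ + c) = Complex.normSq μ + 2 * c * μ.re + c ^ 2 := by
        simp [Complex.normSq_apply, Complex.add_re, Complex.add_im]
        ring
      rw [this]
      nlinarith
    have h5 : ‖μ + c‖ ^ 2 < c ^ 2 := by rwa [Complex.sq_norm]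
    nlinarith [norm_nonneg (μ + c)]
  -- the nonnegative matrix N = Q + c•1
  set N : Matrix (Fin n) (Fin n) ℝ := Q + c • (1 : Matrix (Fin n) (Fin n) ℝ) with hNdef
  have hN : ∀ i j, 0 ≤ N i j := by
    intro i j
    by_cases h : i = j
    · subst h
      simpa [hNdef, Matrix.add_apply, Matrix.smul_apply, Matrix.one_apply] using hcdiag i
    · simpa [hNdef, Matrix.add_apply, Matrix.smul_apply, Matrix.one_apply, h] using hoff i j h
  -- powers of N dominate c^k on u
  have hNu : ∀ k : ℕ, ∀ i, c ^ k * u i ≤ (N ^ k).mulVec u i := by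
    intro k
    induction k with
    | zero => intro i; simp [Matrix.one_mulVec]
    | succ k ih =>
      intro i
      have h1 : (N ^ (k + 1)).mulVec u i = N.mulVec ((N ^ k).mulVec u) i := by
        rw [pow_succ']
        rw [← Matrix.mulVec_mulVec]
      have h2 : N.mulVec (fun j => c ^ k * u j) i ≤ N.mulVec ((N ^ k).mulVec u) i := by
        simp only [Matrix.mulVec, dotProduct]
        exact Finset.sum_le_sum fun j _ => mul_le_mul_of_nonneg_left (ih j) (hN i j)
      have h3 : N.mulVec (fun j => c ^ k * u j) i = c ^ k * N.mulVec u i := by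
        simp only [Matrix.mulVec, dotProduct, Finset.mul_sum]
        exact Finset.sum_congr rfl fun j _ => by ring
      have h4 : c * u i ≤ N.mulVec u i := by
        have : N.mulVec u i = Q.mulVec u i + c * u i := by
          simp [hNdef, Matrix.add_mulVec, Matrix.smul_mulVec, Matrix.one_mulVec]
        rw [this]
        linarith [hQu i]
      calc c ^ (k + 1) * u i = c ^ k * (c * u i) := by ring
        _ ≤ c ^ k * N.mulVec u i := mul_le_mul_of_nonneg_left h4 (by positivity)
        _ = N.mulVec (fun j => c ^ k * u j) i := h3.symm
        _ ≤ N.mulVec ((N ^ k).mulVec u) i := h2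
        _ = (N ^ (k + 1)).mulVec u i := h1.symm
  -- complexification
  set NC : Matrix (Fin n) (Fin n) ℂ := N.map Complex.ofReal with hNC
  have hNCeq : NC = Mq + (c : ℂ) • (1 : Matrix (Fin n) (Fin n) ℂ) := by
    ext i j
    by_cases h : i = j <;>
      simp [hNC, hNdef, hMq, Matrix.map_apply, Matrix.add_apply, Matrix.smul_apply,
        Matrix.one_apply, h]
  -- the spectrum of NC lies in the open ball of radius c
  have hspecN : ∀ z ∈ spectrum ℂ NC, ‖z‖₊ < c.toNNReal := by
    intro z hz
    have hmem : (z - c) ∈ spectrum ℂ Mq := by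
      rw [spectrum.mem_iff] at hz ⊢
      convert hz using 2
      rw [hNCeq, Algebra.algebraMap_eq_smul_one, Algebra.algebraMap_eq_smul_one, sub_smul]
      abel
    have habs : ‖z‖ < c := by
      have := hcspec _ hmem
      simpa using this
    rw [← NNReal.coe_lt_coe]
    rw [coe_nnnorm, Real.coe_toNNReal _ hc_pos.le]
    exact habs
  have hrad : spectralRadius ℂ NC < (c.toNNReal : ℝ≥0∞) :=
    spectrum.spectralRadius_lt_of_forall_lt NC hspecN
  -- Gelfand's formula gives a power k with ‖NC ^ k‖ < c ^ k
  have hG := spectrum.pow_nnnorm_pow_one_div_tendsto_nhds_spectralRadius NC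
  have hev : ∀ᶠ k : ℕ in atTop,
      ((‖NC ^ k‖₊ : ℝ≥0∞) ^ (1 / (k : ℝ)) < (c.toNNReal : ℝ≥0∞)) :=
    hG.eventually_lt_const hrad
  obtain ⟨k, hk, hk1⟩ := (hev.and (eventually_ge_atTop 1)).exists
  have hkne : (k : ℝ) ≠ 0 := by exact_mod_cast Nat.one_le_iff_ne_zero.mp hk1
  have hnormlt : ‖NC ^ k‖ < c ^ k := by
    have hx : (‖NC ^ k‖₊ : ℝ≥0∞) = ((‖NC ^ k‖₊ : ℝ≥0∞) ^ (1 / (k : ℝ))) ^ (k : ℝ) := by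
      rw [← ENNReal.rpow_mul, one_div, inv_mul_cancel₀ hkne, ENNReal.rpow_one]
    have h1 : (‖NC ^ k‖₊ : ℝ≥0∞) < (c.toNNReal : ℝ≥0∞) ^ (k : ℝ) := by
      rw [hx]
      exact ENNReal.rpow_lt_rpow hk (by positivity)
    rw [ENNReal.rpow_natCast, ← ENNReal.coe_pow, ENNReal.coe_lt_coe] at h1
    have h2 : ‖NC ^ k‖ < ((c.toNNReal ^ k : ℝ≥0) : ℝ) := h1
    rwa [NNReal.coe_pow, Real.coe_toNNReal _ hc_pos.le] at h2
  -- the contradiction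
  set uC : Fin n → ℂ := fun j => (u j : ℂ) with huC
  have hNCk : NC ^ k = (N ^ k).map Complex.ofReal := by
    have h := map_pow (Complex.ofRealHom.mapMatrix) N k
    simp only [RingHom.mapMatrix_apply] at h
    exact h.symm
  have hmv : ((NC ^ k).mulVec uC) i0 = (((N ^ k).mulVec u) i0 : ℝ) := by
    rw [hNCk]
    simp only [Matrix.mulVec, dotProduct, Matrix.map_apply, huC]
    push_cast
    rfl
  have hub : ‖uC‖ ≤ u i0 := by
    rw [pi_norm_le_iff_of_nonneg (hu0 i0)]
    intro j
    simp only [huC, Complex.norm_real, Real.norm_eq_abs, abs_of_nonneg (hu0 j)]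
    exact himax j
  have h1 : c ^ k * u i0 ≤ ((N ^ k).mulVec u) i0 := hNu k i0
  have h2 : ((N ^ k).mulVec u) i0 ≤ ‖(NC ^ k).mulVec uC‖ := by
    refine le_trans ?_ (norm_le_pi_norm ((NC ^ k).mulVec uC) i0)
    rw [hmv, Complex.norm_real, Real.norm_eq_abs]
    exact le_abs_self _
  have h3 : ‖(NC ^ k).mulVec uC‖ ≤ ‖NC ^ k‖ * ‖uC‖ := Matrix.linfty_opNorm_mulVec _ _
  have h4 : ‖NC ^ k‖ * ‖uC‖ ≤ ‖NC ^ k‖ * u i0 :=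
    mul_le_mul_of_nonneg_left hub (norm_nonneg _)
  have h5 : ‖NC ^ k‖ * u i0 < c ^ k * u i0 := mul_lt_mul_of_pos_right hnormlt hi0
  linarith

/-- If `Q++` is a subgenerator, `R+` a positive diagonal matrix and `D+` a nonnegative
diagonal matrix, then `W(s) = R+⁻¹(Q++ − s·D+)` is stable for every `s ≥ 0`;
in particular it is invertible. -/
theorem stmt_13 (n : ℕ) (Qpp : Matrix (Fin n) (Fin n) ℝ)
    (hoff : ∀ i j, i ≠ j → 0 ≤ Qpp i j)
    (hspec : ∀ μ ∈ spectrum ℂ (Qpp.map Complex.ofReal), μ.re < 0)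
    (r d : Fin n → ℝ) (hr : ∀ i, 0 < r i) (hd : ∀ i, 0 ≤ d i)
    (W : ℝ → Matrix (Fin n) (Fin n) ℝ)
    (hW : ∀ s, W s = (Matrix.diagonal r)⁻¹ * (Qpp - s • Matrix.diagonal d)) :
    ∀ s : ℝ, 0 ≤ s →
      (∀ μ ∈ spectrum ℂ ((W s).map Complex.ofReal), μ.re < 0) ∧ IsUnit (W s) := by
  intro s hs
  classical
  have hrdet : IsUnit (Matrix.diagonal r).det := by
    rw [Matrix.det_diagonal]
    exact isUnit_iff_ne_zero.mpr (Finset.prod_ne_zero_iff.mpr fun i _ => (hr i).ne')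
  have hWs : Matrix.diagonal r * W s = Qpp - s • Matrix.diagonal d := by
    rw [hW s, ← Matrix.mul_assoc, Matrix.mul_nonsing_inv _ hrdet, Matrix.one_mul]
  set Wc : Matrix (Fin n) (Fin n) ℂ := (W s).map Complex.ofReal with hWcdef
  have main : ∀ μ ∈ spectrum ℂ ((W s).map Complex.ofReal), μ.re < 0 := by
    intro μ hμ
    by_contra hre
    rw [not_lt] at hre
    rw [spectrum.mem_iff] at hμ
    have hdet : (algebraMap ℂ (Matrix (Fin n) (Fin n) ℂ) μ - Wc).det = 0 := by
      by_contra hd'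
      exact hμ ((Matrix.isUnit_iff_isUnit_det _).mpr (isUnit_iff_ne_zero.mpr hd'))
    obtain ⟨v, hv0, hv⟩ := (Matrix.exists_mulVec_eq_zero_iff).mpr hdet
    have hWv : Wc.mulVec v = μ • v := by
      rw [Matrix.sub_mulVec] at hv
      have h2 : (algebraMap ℂ (Matrix (Fin n) (Fin n) ℂ) μ).mulVec v = μ • v := by
        rw [Algebra.algebraMap_eq_smul_one, Matrix.smul_mulVec, Matrix.one_mulVec]
      rw [h2] at hv
      exact (sub_eq_zero.mp hv).symm
    have hmul : (Matrix.diagonal r).map Complex.ofReal * Wc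
        = (Qpp - s • Matrix.diagonal d).map Complex.ofReal := by
      have h := congrArg (Complex.ofRealHom.mapMatrix) hWs
      have hco : ⇑Complex.ofRealHom = Complex.ofReal := rfl
      simpa only [_root_.map_mul, RingHom.mapMatrix_apply, hco] using h
    have hEq : ∀ i, (∑ j, (Qpp i j : ℂ) * v j)
        = ((s : ℂ) * (d i : ℂ) + μ * (r i : ℂ)) * v i := by
      intro i
      have h1 : ((Matrix.diagonal r).map Complex.ofReal * Wc).mulVec v
          = ((Qpp - s • Matrix.diagonal d).map Complex.ofReal).mulVec v := by rw [hmul]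
      rw [← Matrix.mulVec_mulVec, hWv] at h1
      have h2 := congrFun h1 i
      have hdiagmap : (Matrix.diagonal r).map Complex.ofReal
          = Matrix.diagonal (fun i => (r i : ℂ)) := Matrix.diagonal_map Complex.ofReal_zero
      rw [hdiagmap, Matrix.mulVec_diagonal] at h2
      simp only [Matrix.mulVec, dotProduct, Matrix.map_apply, Matrix.sub_apply,
        Matrix.smul_apply, Matrix.diagonal_apply, Pi.smul_apply, smul_eq_mul,
        Complex.ofReal_sub, Complex.ofReal_mul] at h2
      simp only [sub_mul, Finset.sum_sub_distrib, apply_ite Complex.ofReal,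
        Complex.ofReal_zero, mul_ite, ite_mul, mul_zero, zero_mul, Finset.sum_ite_eq,
        Finset.mem_univ, if_true] at h2
      linear_combination -h2
    -- the vector of absolute values
    set u : Fin n → ℝ := fun j => ‖v j‖ with hu
    obtain ⟨j0, hj0⟩ : ∃ j, v j ≠ 0 := Function.ne_iff.mp hv0
    obtain ⟨i0, -, hi0max⟩ := Finset.exists_max_image Finset.univ u ⟨j0, Finset.mem_univ j0⟩
    have himax : ∀ j, u j ≤ u i0 := fun j => hi0max j (Finset.mem_univ j)
    have hi0pos : 0 < u i0 :=
      lt_of_lt_of_le (by simpa [hu] using norm_pos_iff.mpr hj0) (himax j0)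
    have hQu : ∀ i, 0 ≤ Qpp.mulVec u i := by
      intro i
      set Zi : ℂ := (s : ℂ) * (d i : ℂ) + μ * (r i : ℂ) with hZi
      have hZre : 0 ≤ Zi.re := by
        simp only [hZi, Complex.add_re, Complex.mul_re, Complex.ofReal_re, Complex.ofReal_im,
          mul_zero, zero_mul, sub_zero]
        have h1 : 0 ≤ s * d i := mul_nonneg hs (hd i)
        have h2 : 0 ≤ μ.re * r i := mul_nonneg hre (hr i).le
        linarith
      have hsum : ∑ j ∈ Finset.univ.erase i, (Qpp i j : ℂ) * v j
          = (Zi - (Qpp i i : ℂ)) * v i := by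
        have h := hEq i
        rw [← Finset.add_sum_erase _ (fun j => (Qpp i j : ℂ) * v j) (Finset.mem_univ i)] at h
        rw [← hZi] at h
        linear_combination h
      have htri : ‖Zi - (Qpp i i : ℂ)‖ * u i
          ≤ ∑ j ∈ Finset.univ.erase i, Qpp i j * u j := by
        have h1 : ‖(Zi - (Qpp i i : ℂ)) * v i‖
            ≤ ∑ j ∈ Finset.univ.erase i, Qpp i j * u j := by
          rw [← hsum]
          refine le_trans (norm_sum_le _ _) (le_of_eq (Finset.sum_congr rfl fun j hj => ?_))
          have hji : i ≠ j := fun h => (Finset.mem_erase.mp hj).1 h.symm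
          rw [norm_mul, Complex.norm_real, Real.norm_eq_abs, abs_of_nonneg (hoff i j hji)]
        rw [norm_mul] at h1
        exact h1
      have hlow : (Zi.re - Qpp i i) * u i ≤ ‖Zi - (Qpp i i : ℂ)‖ * u i := by
        refine mul_le_mul_of_nonneg_right ?_ (norm_nonneg _)
        calc Zi.re - Qpp i i = (Zi - (Qpp i i : ℂ)).re := by simp
          _ ≤ ‖Zi - (Qpp i i : ℂ)‖ := Complex.re_le_norm _
          _ = ‖Zi - (Qpp i i : ℂ)‖ := rfl
      have hsplit : Qpp.mulVec u i
          = Qpp i i * u i + ∑ j ∈ Finset.univ.erase i, Qpp i j * u j := by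
        simp only [Matrix.mulVec, dotProduct]
        rw [← Finset.add_sum_erase _ (fun j => Qpp i j * u j) (Finset.mem_univ i)]
      have hzu : 0 ≤ Zi.re * u i := mul_nonneg hZre (norm_nonneg _)
      rw [hsplit]
      nlinarith [htri, hlow, hzu]
    exact metzler_no_subinvariant n Qpp hoff hspec u (fun j => norm_nonneg _) i0 hi0pos
      himax hQu
  refine ⟨main, ?_⟩
  have h0 : (0 : ℂ) ∉ spectrum ℂ ((W s).map Complex.ofReal) := by
    intro h
    simpa using main 0 h
  rw [spectrum.notMem_iff] at h0
  rw [map_zero, zero_sub] at h0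
  have hWcUnit : IsUnit Wc := by
    have := h0.neg
    rwa [neg_neg] at this
  have hdetC : IsUnit Wc.det := (Matrix.isUnit_iff_isUnit_det _).mp hWcUnit
  have hdetWc : Wc.det = ((W s).det : ℂ) := (RingHom.map_det Complex.ofRealHom (W s)).symm
  rw [hdetWc] at hdetC
  have hne : (W s).det ≠ 0 := by
    intro h
    rw [h] at hdetC
    simpa using hdetC
  exact (Matrix.isUnit_iff_isUnit_det _).mpr (isUnit_iff_ne_zero.mpr hne)
end

section
/- Let A be an n×n real matrix with nonnegative off-diagonal entries, strictly negative diagonal entries, and row sums ≤ 0, with at least one row sum strictly negative in every communicating class (equivalently, all eigenvalues of A have negative real part). Then for any diagonal matrix R with positive diagonal entries, all eigenvalues of R^{-1}·A have negative real part. -/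
open Matrix

/-- Row scaling by positive constants preserves the Hurwitz (stability) property of
a nonsingular subgenerator matrix. -/
theorem stmt_14 (n : ℕ) (A : Matrix (Fin n) (Fin n) ℝ)
    (hoff : ∀ i j, i ≠ j → 0 ≤ A i j)
    (hdiag : ∀ i, A i i < 0)
    (hrow : ∀ i, ∑ j, A i j ≤ 0)
    (hspec : ∀ μ ∈ spectrum ℂ (A.map Complex.ofReal), μ.re < 0)
    (r : Fin n → ℝ) (hr : ∀ i, 0 < r i) :
    ∀ μ ∈ spectrum ℂ (((Matrix.diagonal r)⁻¹ * A).map Complex.ofReal), μ.re < 0 := by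
  intro μ hμ
  set B : Matrix (Fin n) (Fin n) ℂ := ((Matrix.diagonal r)⁻¹ * A).map Complex.ofReal with hB
  -- entries of B
  have hrne : ∀ i, r i ≠ 0 := fun i => (hr i).ne'
  have hinv : (Matrix.diagonal r)⁻¹ = Matrix.diagonal (fun i => (r i)⁻¹) := by
    apply Matrix.inv_eq_right_inv
    rw [Matrix.diagonal_mul_diagonal]
    have : (fun i => r i * (r i)⁻¹) = fun _ => (1:ℝ) :=
      funext fun i => mul_inv_cancel₀ (hrne i)
    rw [this, Matrix.diagonal_one]
  have hentry : ∀ i j, B i j = (((r i)⁻¹ * A i j : ℝ) : ℂ) := by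
    intro i j
    simp [hB, Matrix.map_apply, hinv, Matrix.diagonal_mul]
  -- μ ≠ 0 since B is invertible
  have hAunit : IsUnit (A.map Complex.ofReal) := by
    by_contra h
    exact absurd (hspec 0 (spectrum.zero_mem ℂ h)) (by norm_num)
  have hBunit : IsUnit B := by
    have hmap : B = ((Matrix.diagonal r)⁻¹).map Complex.ofReal * A.map Complex.ofReal := by
      rw [hB]
      exact Matrix.map_mul (f := Complex.ofRealHom)
    have hDunit : IsUnit (((Matrix.diagonal r)⁻¹).map Complex.ofReal) := by
      rw [hinv, Matrix.diagonal_map (by simp : (Complex.ofReal 0 : ℂ) = 0)]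
      rw [Matrix.isUnit_diagonal]
      refine IsUnit.of_mul_eq_one (fun i => ((r i : ℝ) : ℂ)) ?_
      funext i
      show (((r i)⁻¹ : ℝ) : ℂ) * ((r i : ℝ) : ℂ) = 1
      rw [← Complex.ofReal_mul, inv_mul_cancel₀ (hrne i), Complex.ofReal_one]
    rw [hmap]
    exact hDunit.mul hAunit
  have hμ0 : μ ≠ 0 := by
    rintro rfl
    exact spectrum.not_isUnit_of_zero_mem ℂ hμ hBunit
  -- spectrum → eigenvalue
  have hE : Module.End.HasEigenvalue (Matrix.toLin' B) μ := by
    have := (AlgEquiv.spectrum_eq (Matrix.toLinAlgEquiv <| Pi.basisFun ℂ (Fin n)) B) ▸ hμ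
    exact Module.End.hasEigenvalue_iff_mem_spectrum.mpr this
  obtain ⟨k, hk⟩ := eigenvalue_mem_ball hE
  rw [Metric.mem_closedBall] at hk
  -- bound the Gershgorin radius
  have hsum : ∑ j ∈ Finset.univ.erase k, ‖B k j‖ ≤ -((r k)⁻¹ * A k k) := by
    have h1 : ∀ j ∈ Finset.univ.erase k, ‖B k j‖ = (r k)⁻¹ * A k j := by
      intro j hj
      rw [hentry, Complex.norm_real, Real.norm_of_nonneg
        (mul_nonneg (inv_nonneg.mpr (hr k).le)
          (hoff k j (Finset.ne_of_mem_erase hj).symm))]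
    rw [Finset.sum_congr rfl h1]
    have h2 : ∑ j ∈ Finset.univ.erase k, (r k)⁻¹ * A k j
        = (r k)⁻¹ * (∑ j, A k j - A k k) := by
      rw [← Finset.mul_sum, Finset.sum_erase_eq_sub (Finset.mem_univ k)]
    rw [h2]
    have := hrow k
    have hrk : (0:ℝ) < (r k)⁻¹ := inv_pos.mpr (hr k)
    nlinarith
  set c : ℝ := (r k)⁻¹ * A k k with hc
  have hcneg : c < 0 := mul_neg_of_pos_of_neg (inv_pos.mpr (hr k)) (hdiag k)
  have hdist : dist μ ((c : ℝ) : ℂ) ≤ -c := by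
    have : B k k = ((c : ℝ) : ℂ) := hentry k k
    calc dist μ ((c:ℝ):ℂ) = dist μ (B k k) := by rw [this]
    _ ≤ _ := hk
    _ ≤ -c := hsum
  -- now conclude Re μ < 0
  have hsq : (μ.re - c)^2 + μ.im^2 ≤ c^2 := by
    rw [Complex.dist_eq_re_im] at hdist
    have h0 : (0:ℝ) ≤ (μ.re - c)^2 + (μ.im - 0)^2 := by positivity
    have := Real.sq_sqrt h0
    simp only [Complex.ofReal_re, Complex.ofReal_im, sub_zero] at hdist this ⊢
    nlinarith [Real.sqrt_nonneg ((μ.re - c)^2 + μ.im^2)]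
  by_contra h
  push_neg at h
  have hre : μ.re = 0 := by nlinarith
  have him : μ.im = 0 := by nlinarith
  exact hμ0 (Complex.ext hre him)
end

section
/- Let Q be an m×m subgenerator (off-diagonal entries ≥ 0, eigenvalues with negative real part) partitioned into blocks Q00, Q0+, Q+0, Q++. Then the Schur complement Q++ − Q+0·Q00^{-1}·Q0+ has nonnegative off-diagonal entries and all its eigenvalues have negative real part (Q00 is invertible since it is a principal submatrix of Q). -/
set_option linter.unusedSectionVars false

open Matrix

attribute [local instance] Matrix.linftyOpNormedRing Matrix.linftyOpNormedAlgebra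
  Matrix.linftyOpNormedAddCommGroup

section AuxSection
variable {ι : Type*} [Fintype ι] [DecidableEq ι]

/-- Entrywise nonnegativity is preserved by matrix multiplication. -/
lemma aux_mul_nonneg {A B : Matrix ι ι ℝ} (hA : ∀ i j, 0 ≤ A i j)
    (hB : ∀ i j, 0 ≤ B i j) : ∀ i j, 0 ≤ (A * B) i j := by
  intro i j
  rw [Matrix.mul_apply]
  exact Finset.sum_nonneg fun k _ => mul_nonneg (hA i k) (hB k j)

lemma aux_pow_nonneg {A : Matrix ι ι ℝ} (hA : ∀ i j, 0 ≤ A i j) :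
    ∀ (m : ℕ) i j, 0 ≤ (A ^ m) i j := by
  intro m
  induction m with
  | zero => intro i j; simp [Matrix.one_apply]; positivity
  | succ m ih => rw [pow_succ]; exact aux_mul_nonneg ih hA

lemma aux_entry_le_norm (A : Matrix ι ι ℝ) (i j : ι) : ‖A i j‖ ≤ ‖A‖ := by
  have h1 : ‖A i j‖₊ ≤ ∑ j' : ι, ‖A i j'‖₊ :=
    Finset.single_le_sum (f := fun j' => ‖A i j'‖₊) (fun _ _ => by positivity) (Finset.mem_univ j)
  have h2 : (∑ j' : ι, ‖A i j'‖₊) ≤ ‖A‖₊ := by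
    rw [Matrix.linfty_opNNNorm_def]
    exact Finset.le_sup (f := fun i => ∑ j' : ι, ‖A i j'‖₊) (Finset.mem_univ i)
  exact_mod_cast h1.trans h2

lemma aux_tsum_entry {f : ℕ → Matrix ι ι ℝ} (hf : Summable f)
    (hnn : ∀ m i j, 0 ≤ f m i j) : ∀ i j, 0 ≤ (∑' m, f m) i j := by
  intro i j
  let φ : Matrix ι ι ℝ →+ ℝ :=
    { toFun := fun A => A i j, map_zero' := rfl, map_add' := fun _ _ => rfl }
  have hc : Continuous φ := (continuous_apply j).comp (continuous_apply i)
  have := (hf.hasSum.map φ hc)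
  exact hasSum_le (fun m => hnn m i j) hasSum_zero this
/-- If all complex eigenvalues of `A` have negative real part, then `t • 1 - A`
has nonzero determinant for every `t ≥ 0`. -/
lemma aux_det_ne (A : Matrix ι ι ℝ)
    (hspec : ∀ μ ∈ spectrum ℂ (A.map Complex.ofReal), μ.re < 0)
    {t : ℝ} (ht : 0 ≤ t) : (t • (1 : Matrix ι ι ℝ) - A).det ≠ 0 := by
  intro h
  have hmem : ((t : ℂ)) ∈ spectrum ℂ (A.map Complex.ofReal) := by
    rw [spectrum.mem_iff, Matrix.isUnit_iff_isUnit_det, isUnit_iff_ne_zero, not_not]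
    have hmat : algebraMap ℂ (Matrix ι ι ℂ) (t : ℂ) - A.map Complex.ofReal
        = (t • (1 : Matrix ι ι ℝ) - A).map Complex.ofRealHom := by
      ext i j
      by_cases hij : i = j <;>
        simp [Matrix.algebraMap_matrix_apply, Matrix.map_apply, Matrix.one_apply, hij]
    have hdet : ((t • (1 : Matrix ι ι ℝ) - A).map ⇑Complex.ofRealHom).det
        = Complex.ofRealHom ((t • (1 : Matrix ι ι ℝ) - A).det) := by
      rw [RingHom.map_det, RingHom.mapMatrix_apply]
    rw [hmat, hdet, h, map_zero]
  have := hspec _ hmem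
  simp only [Complex.ofReal_re] at this
  linarith

lemma aux_spec_vec (M : Matrix ι ι ℂ) (μ : ℂ) (h : μ ∈ spectrum ℂ M) :
    ∃ v : ι → ℂ, v ≠ 0 ∧ M *ᵥ v = μ • v := by
  rw [spectrum.mem_iff, Matrix.isUnit_iff_isUnit_det, isUnit_iff_ne_zero, not_not] at h
  obtain ⟨v, hv, hv0⟩ := (Matrix.exists_mulVec_eq_zero_iff).2 h
  refine ⟨v, hv, ?_⟩
  have : (algebraMap ℂ (Matrix ι ι ℂ) μ - M) *ᵥ v = μ • v - M *ᵥ v := by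
    rw [Matrix.sub_mulVec, Algebra.algebraMap_eq_smul_one, Matrix.smul_mulVec,
      Matrix.one_mulVec]
  rw [this] at hv0
  exact (sub_eq_zero.mp hv0).symm
/-- Scaled strict diagonal dominance argument: if `A` has nonnegative off-diagonal
entries and there is a positive vector `x` with `A *ᵥ x < 0` entrywise, then any
complex vector satisfying a pointwise eigen-relation with "eigenvalues" of
nonnegative real part must vanish. -/
lemma aux_dominance (A : Matrix ι ι ℝ)
    (hoff : ∀ i j, i ≠ j → 0 ≤ A i j)
    (x : ι → ℝ) (hx : ∀ i, 0 < x i) (hAx : ∀ i, (A *ᵥ x) i < 0)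
    (w : ι → ℂ)
    (hw : ∀ i, w i ≠ 0 → ∃ ν : ℂ, 0 ≤ ν.re ∧ ((A.map Complex.ofReal) *ᵥ w) i = ν * w i) :
    w = 0 := by
  by_contra hw0
  obtain ⟨i₀, hi₀⟩ : ∃ i, w i ≠ 0 := by
    by_contra hc; push_neg at hc; exact hw0 (funext fun i => hc i)
  have hne : (Finset.univ : Finset ι).Nonempty := ⟨i₀, Finset.mem_univ i₀⟩
  obtain ⟨i, -, hmax⟩ := Finset.exists_max_image Finset.univ
    (fun j => ‖w j‖ / x j) hne
  have hmax' : ∀ j, ‖w j‖ / x j ≤ ‖w i‖ / x i :=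
    fun j => hmax j (Finset.mem_univ j)
  have hwi : w i ≠ 0 := by
    intro h0
    have h1 : ‖w i₀‖ / x i₀ ≤ 0 := by
      simpa [h0] using hmax' i₀
    have h2 : 0 < ‖w i₀‖ / x i₀ :=
      div_pos (by simpa using hi₀) (hx i₀)
    linarith
  have habs : 0 < ‖w i‖ := by simpa using hwi
  obtain ⟨ν, hν, heq⟩ := hw i hwi
  -- rearrange the eigen-relation
  have hsum : ∑ j, (A i j : ℂ) * w j = ν * w i := by
    rw [← heq, Matrix.mulVec, dotProduct]
    simp [Matrix.map_apply]
  have hsplit : (ν - (A i i : ℂ)) * w i = ∑ j ∈ Finset.univ.erase i, (A i j : ℂ) * w j := by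
    rw [sub_mul, ← hsum,
      ← Finset.add_sum_erase Finset.univ (fun j => (A i j : ℂ) * w j) (Finset.mem_univ i)]
    ring
  -- bound each |w j| by (|w i| / x i) * x j
  have hbound : ∀ j, ‖w j‖ ≤ ‖w i‖ / x i * x j := by
    intro j
    have h := hmax' j
    rw [div_le_div_iff₀ (hx j) (hx i)] at h
    rw [div_mul_eq_mul_div, le_div_iff₀ (hx i)]
    linarith
  -- the strict (scaled) diagonal dominance inequality
  have hrow : ∑ j ∈ Finset.univ.erase i, A i j * x j < -(A i i) * x i := by
    have h := hAx i
    rw [Matrix.mulVec, dotProduct,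
      ← Finset.add_sum_erase Finset.univ (fun j => A i j * x j) (Finset.mem_univ i)] at h
    linarith
  set c : ℝ := ‖w i‖ / x i with hc
  have hcpos : 0 < c := div_pos habs (hx i)
  have h1 : ‖ν - (A i i : ℂ)‖ * ‖w i‖
      ≤ ∑ j ∈ Finset.univ.erase i, A i j * ‖w j‖ := by
    rw [← norm_mul, hsplit]
    refine (norm_sum_le _ _).trans ?_
    refine Finset.sum_le_sum fun j hj => ?_
    rw [norm_mul, Complex.norm_real, Real.norm_eq_abs,
      abs_of_nonneg (hoff i j (Ne.symm (Finset.ne_of_mem_erase hj)))]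
  have h2 : ∑ j ∈ Finset.univ.erase i, A i j * ‖w j‖
      ≤ c * ∑ j ∈ Finset.univ.erase i, A i j * x j := by
    rw [Finset.mul_sum]
    refine Finset.sum_le_sum fun j hj => ?_
    have hb := hbound j
    have hA : 0 ≤ A i j := hoff i j (Ne.symm (Finset.ne_of_mem_erase hj))
    calc A i j * ‖w j‖ ≤ A i j * (c * x j) :=
          mul_le_mul_of_nonneg_left hb hA
      _ = c * (A i j * x j) := by ring
  have h3 : c * ∑ j ∈ Finset.univ.erase i, A i j * x j < c * (-(A i i) * x i) :=
    mul_lt_mul_of_pos_left hrow hcpos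
  have h4 : c * (-(A i i) * x i) = -(A i i) * ‖w i‖ := by
    rw [hc, div_mul_eq_mul_div, div_eq_iff (hx i).ne']
    ring
  have hlow : -(A i i) ≤ ‖ν - (A i i : ℂ)‖ := by
    have h := Complex.re_le_norm (ν - (A i i : ℂ))
    simp only [Complex.sub_re, Complex.ofReal_re] at h
    linarith
  nlinarith [habs]
/-- Key lemma: a "subgenerator" (nonnegative off-diagonal entries, all complex
eigenvalues with negative real part) has nonzero determinant, and the inverse of
its negative is entrywise nonnegative. -/
lemma aux_neg_inv_nonneg (A : Matrix ι ι ℝ)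
    (hoff : ∀ i j, i ≠ j → 0 ≤ A i j)
    (hspec : ∀ μ ∈ spectrum ℂ (A.map Complex.ofReal), μ.re < 0) :
    A.det ≠ 0 ∧ ∀ i j, 0 ≤ (-A)⁻¹ i j := by
  classical
  set R : ℝ → Matrix ι ι ℝ := fun t => t • (1 : Matrix ι ι ℝ) - A with hR
  have hdet : ∀ t : ℝ, 0 ≤ t → (R t).det ≠ 0 := fun t ht => aux_det_ne A hspec ht
  have hdetA : A.det ≠ 0 := by
    intro h
    apply hdet 0 le_rfl
    show (0 • (1 : Matrix ι ι ℝ) - A).det = 0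
    rw [zero_smul, zero_sub, Matrix.det_neg, h, mul_zero]
  refine ⟨hdetA, ?_⟩
  rcases isEmpty_or_nonempty ι with hempty | hne
  · intro i j; exact absurd (Fintype.card_pos_iff.mpr ⟨i⟩).ne' (by simp [Fintype.card_eq_zero])
  -- the stepping lemma: push nonnegativity of the resolvent a small step down
  have hstep : ∀ t t' : ℝ, 0 ≤ t' → t' ≤ t →
      (∀ i j, 0 ≤ (R t)⁻¹ i j) → (t - t') * ‖(R t)⁻¹‖ < 1 →
      ∀ i j, 0 ≤ (R t')⁻¹ i j := by
    intro t t' ht' htt' hpos hlt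
    have ht : 0 ≤ t := le_trans ht' htt'
    set M := (R t)⁻¹ with hM
    have hRM : R t * M = 1 :=
      Matrix.mul_nonsing_inv _ (isUnit_iff_ne_zero.mpr (hdet t ht))
    set c := t - t' with hc
    have hc0 : 0 ≤ c := by simp only [hc]; linarith
    set T := c • M with hT
    have hTn : ‖T‖ < 1 := by
      rw [hT, norm_smul, Real.norm_eq_abs, abs_of_nonneg hc0]
      exact hlt
    have hgeo : (1 - T) * ∑' n : ℕ, T ^ n = 1 := mul_neg_geom_series T hTn
    have hsum : Summable fun n : ℕ => T ^ n := summable_geometric_of_norm_lt_one hTn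
    have hkey : R t' = R t * (1 - T) := by
      rw [hT, mul_sub, mul_one, Matrix.mul_smul, hRM]
      have h1 : t' • (1 : Matrix ι ι ℝ) = t • 1 - c • 1 := by
        rw [← sub_smul]; congr 1; rw [hc]; ring
      show t' • (1 : Matrix ι ι ℝ) - A = (t • 1 - A) - c • 1
      rw [h1]; abel
    have hinv : R t' * ((∑' n : ℕ, T ^ n) * M) = 1 := by
      rw [hkey, mul_assoc, ← mul_assoc (1 - T), hgeo, one_mul, hRM]
    have hTpos : ∀ i j, 0 ≤ T i j := by
      intro i j
      rw [hT, Matrix.smul_apply, smul_eq_mul]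
      exact mul_nonneg hc0 (hpos i j)
    have hSpos : ∀ i j, 0 ≤ (∑' n : ℕ, T ^ n) i j :=
      aux_tsum_entry hsum (fun m => aux_pow_nonneg hTpos m)
    rw [Matrix.inv_eq_right_inv hinv]
    exact aux_mul_nonneg hSpos hpos
  -- a starting point far to the right
  set b := ‖A‖ with hb
  have hb0 : 0 ≤ b := norm_nonneg A
  set t₀ := b + 1 with ht₀def
  have ht₀pos : 0 < t₀ := by positivity
  set B := A + b • (1 : Matrix ι ι ℝ) with hB
  have hBpos : ∀ i j, 0 ≤ B i j := by
    intro i j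
    rcases eq_or_ne i j with rfl | hij
    · have h := aux_entry_le_norm A i i
      rw [Real.norm_eq_abs] at h
      have := abs_le.mp h
      simp only [hB, Matrix.add_apply, Matrix.smul_apply, Matrix.one_apply_eq, smul_eq_mul,
        mul_one]
      linarith [this.1]
    · simpa [hB, Matrix.one_apply, hij] using hoff i j hij
  set s := t₀ + b with hs
  have hspos : 0 < s := by positivity
  have hBn : ‖B‖ < s := by
    calc ‖B‖ ≤ ‖A‖ + ‖b • (1 : Matrix ι ι ℝ)‖ := norm_add_le _ _
      _ = b + b * 1 := by rw [norm_smul, Real.norm_eq_abs, abs_of_nonneg hb0, norm_one, hb]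
      _ < s := by simp only [hs, ht₀def]; linarith
  set T₀ := s⁻¹ • B with hT₀
  have hT₀n : ‖T₀‖ < 1 := by
    rw [hT₀, norm_smul, Real.norm_eq_abs, abs_of_nonneg (inv_nonneg.mpr hspos.le)]
    rw [inv_mul_lt_iff₀ hspos, mul_one]
    exact hBn
  have hgeo₀ : (1 - T₀) * ∑' n : ℕ, T₀ ^ n = 1 := mul_neg_geom_series T₀ hT₀n
  have hsum₀ : Summable fun n : ℕ => T₀ ^ n := summable_geometric_of_norm_lt_one hT₀n
  have hRt₀ : R t₀ = s • (1 - T₀) := by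
    rw [hT₀, smul_sub, smul_smul, mul_inv_cancel₀ hspos.ne', one_smul]
    show t₀ • (1 : Matrix ι ι ℝ) - A = s • 1 - B
    rw [hB, hs]
    module
  have hinv₀ : R t₀ * (s⁻¹ • ∑' n : ℕ, T₀ ^ n) = 1 := by
    rw [hRt₀, Matrix.mul_smul, Matrix.smul_mul, smul_smul, inv_mul_cancel₀ hspos.ne',
      one_smul, hgeo₀]
  have hpos₀ : ∀ i j, 0 ≤ (R t₀)⁻¹ i j := by
    rw [Matrix.inv_eq_right_inv hinv₀]
    intro i j
    rw [Matrix.smul_apply, smul_eq_mul]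
    exact mul_nonneg (inv_nonneg.mpr hspos.le)
      (aux_tsum_entry hsum₀ (fun m => aux_pow_nonneg (fun i j => by
        rw [hT₀, Matrix.smul_apply, smul_eq_mul]
        exact mul_nonneg (inv_nonneg.mpr hspos.le) (hBpos i j)) m) i j)
  -- a uniform bound for the resolvent norm on [0, t₀]
  have hcontR : Continuous R := by
    have : Continuous fun t : ℝ => t • (1 : Matrix ι ι ℝ) :=
      continuous_id.smul continuous_const
    simpa [hR] using this.fun_sub continuous_const
  have hcont : ContinuousOn (fun u : ℝ => ‖(R u)⁻¹‖) (Set.Icc 0 t₀) := by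
    have hg : ContinuousOn (fun u : ℝ => ((R u).det)⁻¹ • (R u).adjugate) (Set.Icc 0 t₀) := by
      refine ContinuousOn.fun_smul ?_ (hcontR.matrix_adjugate).continuousOn
      exact ContinuousOn.inv₀ (hcontR.matrix_det).continuousOn fun u hu => hdet u hu.1
    refine (hg.norm).congr fun u hu => ?_
    rw [Matrix.inv_def, Ring.inverse_eq_inv]
  obtain ⟨u₀, hu₀, hKmax'⟩ := isCompact_Icc.exists_isMaxOn
    (Set.nonempty_Icc.mpr ht₀pos.le) hcont
  have hKmax : ∀ u ∈ Set.Icc (0:ℝ) t₀, ‖(R u)⁻¹‖ ≤ ‖(R u₀)⁻¹‖ := fun u hu => hKmax' hu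
  set K := ‖(R u₀)⁻¹‖ with hKdef
  have hK0 : 0 ≤ K := norm_nonneg _
  set δ := (K + 1)⁻¹ with hδ
  have hδpos : 0 < δ := by positivity
  -- walk down from t₀ to 0 in steps of size δ
  have hwalk : ∀ m : ℕ, ∀ i j, 0 ≤ (R (max 0 (t₀ - m * δ)))⁻¹ i j := by
    intro m
    induction m with
    | zero =>
      have : max 0 (t₀ - (0 : ℕ) * δ) = t₀ := by
        simp [max_eq_right ht₀pos.le]
      rw [this]; exact hpos₀
    | succ m ih =>
      set u := max 0 (t₀ - m * δ) with hu
      set u' := max 0 (t₀ - (m + 1 : ℕ) * δ) with hu'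
      have hu'0 : 0 ≤ u' := le_max_left _ _
      have hmδ : (0:ℝ) ≤ m * δ := by positivity
      have hcast : ((m + 1 : ℕ) : ℝ) * δ = m * δ + δ := by push_cast; ring
      have hle : u' ≤ u := by
        apply max_le_max le_rfl
        rw [hcast]; linarith
      have hu_in : u ∈ Set.Icc 0 t₀ :=
        ⟨le_max_left _ _, max_le ht₀pos.le (by linarith)⟩
      have hdiff : u - u' ≤ δ := by
        rcases le_total (t₀ - m * δ) 0 with h | h
        · have h0 : u = 0 := max_eq_left h
          rw [h0]; linarith
        · have h1 : u = t₀ - m * δ := max_eq_right h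
          have h2 : t₀ - (m + 1 : ℕ) * δ ≤ u' := le_max_right _ _
          rw [h1, hcast] at *
          linarith
      refine hstep u u' hu'0 hle ih ?_
      calc (u - u') * ‖(R u)⁻¹‖ ≤ δ * K := by
            refine mul_le_mul hdiff ?_ (norm_nonneg _) hδpos.le
            exact hKmax u hu_in
        _ < δ * (K + 1) := by
            refine mul_lt_mul_of_pos_left ?_ hδpos
            linarith
        _ = 1 := by rw [hδ, inv_mul_cancel₀ (by positivity)]
  -- conclude at 0
  obtain ⟨m, hm⟩ : ∃ m : ℕ, t₀ - m * δ ≤ 0 := by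
    refine ⟨⌈t₀ / δ⌉₊, ?_⟩
    have h1 : t₀ / δ ≤ (⌈t₀ / δ⌉₊ : ℝ) := Nat.le_ceil _
    rw [div_le_iff₀ hδpos] at h1
    linarith
  have hfin := hwalk m
  rw [max_eq_left hm] at hfin
  have hR0 : R 0 = -A := by
    show (0 : ℝ) • (1 : Matrix ι ι ℝ) - A = -A
    rw [zero_smul, zero_sub]
  rw [hR0] at hfin
  exact hfin
end AuxSection

open Matrix

/-- The Schur complement `Q++ − Q+0·Q00⁻¹·Q0+` of a subgenerator is again a
subgenerator: `Q00` is invertible, the off-diagonal entries of the Schur complement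
are nonnegative, and all its eigenvalues have negative real part. -/
theorem stmt_15 (k n : ℕ)
    (Q00 : Matrix (Fin k) (Fin k) ℝ) (Q0p : Matrix (Fin k) (Fin n) ℝ)
    (Qp0 : Matrix (Fin n) (Fin k) ℝ) (Qpp : Matrix (Fin n) (Fin n) ℝ)
    (Q : Matrix (Fin k ⊕ Fin n) (Fin k ⊕ Fin n) ℝ)
    (hQ : Q = fromBlocks Q00 Q0p Qp0 Qpp)
    (hoff : ∀ i j, i ≠ j → 0 ≤ Q i j)
    (hspec : ∀ μ ∈ spectrum ℂ (Q.map Complex.ofReal), μ.re < 0) :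
    IsUnit Q00 ∧
    (∀ i j, i ≠ j → 0 ≤ (Qpp - Qp0 * Q00⁻¹ * Q0p) i j) ∧
    (∀ μ ∈ spectrum ℂ ((Qpp - Qp0 * Q00⁻¹ * Q0p).map Complex.ofReal), μ.re < 0) := by
  classical
  obtain ⟨hdetQ, hQinv⟩ := aux_neg_inv_nonneg Q hoff hspec
  -- construct a positive vector `x` with `Q *ᵥ x < 0` entrywise
  set x : (Fin k ⊕ Fin n) → ℝ := (-Q)⁻¹ *ᵥ (fun _ => 1) with hx
  have hdetnQ : (-Q).det ≠ 0 := by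
    rw [Matrix.det_neg]
    exact mul_ne_zero (pow_ne_zero _ (by norm_num)) hdetQ
  have hQx1 : (-Q) *ᵥ x = fun _ => 1 := by
    rw [hx, Matrix.mulVec_mulVec,
      Matrix.mul_nonsing_inv _ (isUnit_iff_ne_zero.mpr hdetnQ), Matrix.one_mulVec]
  have hQx : ∀ i, (Q *ᵥ x) i < 0 := by
    intro i
    have h1 : Q *ᵥ x = -((-Q) *ᵥ x) := by rw [Matrix.neg_mulVec, neg_neg]
    rw [h1, hQx1]
    norm_num
  have hxnn : ∀ i, 0 ≤ x i := by
    intro i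
    show 0 ≤ ((-Q)⁻¹ *ᵥ fun _ => 1) i
    rw [Matrix.mulVec, dotProduct]
    exact Finset.sum_nonneg fun j _ => by simpa using hQinv i j
  have hxpos : ∀ i, 0 < x i := by
    intro i
    rcases (hxnn i).lt_or_eq with h | h
    · exact h
    · exfalso
      have h0 : (Q *ᵥ x) i < 0 := hQx i
      have h1 : 0 ≤ (Q *ᵥ x) i := by
        rw [Matrix.mulVec, dotProduct]
        refine Finset.sum_nonneg fun j _ => ?_
        rcases eq_or_ne j i with rfl | hji
        · rw [← h, mul_zero]
        · exact mul_nonneg (hoff i j (Ne.symm hji)) (hxnn j)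
      linarith
  -- block entry facts
  have h0p : ∀ i j, 0 ≤ Q0p i j := fun i j => by
    have h := hoff (Sum.inl i) (Sum.inr j) (by simp)
    rwa [hQ, Matrix.fromBlocks_apply₁₂] at h
  have hp0 : ∀ i j, 0 ≤ Qp0 i j := fun i j => by
    have h := hoff (Sum.inr i) (Sum.inl j) (by simp)
    rwa [hQ, Matrix.fromBlocks_apply₂₁] at h
  have hoff00 : ∀ i j, i ≠ j → 0 ≤ Q00 i j := fun i j hij => by
    have h := hoff (Sum.inl i) (Sum.inl j) (by simpa using hij)
    rwa [hQ, Matrix.fromBlocks_apply₁₁] at h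
  have hoffpp : ∀ i j, i ≠ j → 0 ≤ Qpp i j := fun i j hij => by
    have h := hoff (Sum.inr i) (Sum.inr j) (by simpa using hij)
    rwa [hQ, Matrix.fromBlocks_apply₂₂] at h
  have hmap : Q.map Complex.ofReal = Matrix.fromBlocks (Q00.map Complex.ofReal)
      (Q0p.map Complex.ofReal) (Qp0.map Complex.ofReal) (Qpp.map Complex.ofReal) := by
    rw [hQ, Matrix.fromBlocks_map]
  -- `Q00` is itself a subgenerator (spectrum in the open left half plane)
  have hspec00 : ∀ μ ∈ spectrum ℂ (Q00.map Complex.ofReal), μ.re < 0 := by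
    intro μ hμ
    by_contra hre
    push_neg at hre
    obtain ⟨v, hv0, hv⟩ := aux_spec_vec _ μ hμ
    set w : (Fin k ⊕ Fin n) → ℂ := Sum.elim v 0 with hw
    have hmv : (Q.map Complex.ofReal) *ᵥ w
        = Sum.elim ((Q00.map Complex.ofReal) *ᵥ v) ((Qp0.map Complex.ofReal) *ᵥ v) := by
      rw [hmap, hw, Matrix.fromBlocks_mulVec]
      simp [Matrix.mulVec_zero]
    have hdom : w = 0 := by
      refine aux_dominance Q hoff x hxpos hQx w fun i hi => ?_
      cases i with
      | inl a =>
        refine ⟨μ, hre, ?_⟩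
        rw [hmv, Sum.elim_inl, hv]
        simp [hw]
      | inr b => exact (hi (by simp [hw])).elim
    exact hv0 (funext fun a => congrFun hdom (Sum.inl a))
  obtain ⟨hdet00, hinv00⟩ := aux_neg_inv_nonneg Q00 hoff00 hspec00
  have hUnit00 : IsUnit Q00 :=
    (Matrix.isUnit_iff_isUnit_det Q00).mpr (isUnit_iff_ne_zero.mpr hdet00)
  -- `Q00⁻¹` is entrywise nonpositive
  have hdetn00 : (-Q00).det ≠ 0 := by
    rw [Matrix.det_neg]
    exact mul_ne_zero (pow_ne_zero _ (by norm_num)) hdet00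
  have hQ00inv : ∀ i j, Q00⁻¹ i j ≤ 0 := by
    have hneg : Q00⁻¹ = -(-Q00)⁻¹ := by
      apply Matrix.inv_eq_right_inv
      rw [Matrix.mul_neg, ← Matrix.neg_mul]
      exact Matrix.mul_nonsing_inv _ (isUnit_iff_ne_zero.mpr hdetn00)
    intro i j
    rw [hneg, Matrix.neg_apply, neg_nonpos]
    exact hinv00 i j
  -- off-diagonal entries of the Schur complement
  have hS3 : ∀ i j, (Qp0 * Q00⁻¹ * Q0p) i j ≤ 0 := by
    intro i j
    rw [Matrix.mul_apply]
    refine Finset.sum_nonpos fun b _ => ?_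
    have hb : (Qp0 * Q00⁻¹) i b ≤ 0 := by
      rw [Matrix.mul_apply]
      refine Finset.sum_nonpos fun a _ => ?_
      nlinarith [hp0 i a, hQ00inv a b]
    nlinarith [h0p b j]
  refine ⟨hUnit00, ?_, ?_⟩
  · intro i j hij
    have h1 : (Qpp - Qp0 * Q00⁻¹ * Q0p) i j = Qpp i j - (Qp0 * Q00⁻¹ * Q0p) i j := rfl
    have := hoffpp i j hij
    have := hS3 i j
    rw [h1]; linarith
  -- the spectrum of the Schur complement
  · intro μ hμ
    by_contra hre
    push_neg at hre
    obtain ⟨v, hv0, hv⟩ := aux_spec_vec _ μ hμ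
    have hmm : ∀ (A B : Matrix (Fin k) (Fin k) ℝ),
        (A * B).map Complex.ofReal = A.map Complex.ofReal * B.map Complex.ofReal := by
      intro A B
      ext i j
      simp only [Matrix.map_apply, Matrix.mul_apply]
      push_cast
      ring
    have hmul00 : Q00.map Complex.ofReal * (Q00⁻¹).map Complex.ofReal = 1 := by
      rw [← hmm, Matrix.mul_nonsing_inv Q00 (isUnit_iff_ne_zero.mpr hdet00)]
      ext i j
      simp [Matrix.map_apply, Matrix.one_apply, apply_ite]
    have hScdef : (Qpp - Qp0 * Q00⁻¹ * Q0p).map Complex.ofReal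
        = Qpp.map Complex.ofReal - Qp0.map Complex.ofReal * (Q00⁻¹).map Complex.ofReal
          * Q0p.map Complex.ofReal := by
      ext i j
      simp only [Matrix.map_apply, Matrix.sub_apply, Matrix.mul_apply]
      push_cast
      ring
    set u0 : Fin k → ℂ :=
      -((Q00⁻¹).map Complex.ofReal *ᵥ (Q0p.map Complex.ofReal *ᵥ v)) with hu0
    set u := Sum.elim u0 v with hu
    have e1 : (Qpp.map Complex.ofReal - Qp0.map Complex.ofReal * Q00⁻¹.map Complex.ofReal
        * Q0p.map Complex.ofReal) *ᵥ v = μ • v := by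
      rw [← hScdef]; exact hv
    rw [Matrix.sub_mulVec] at e1
    have hmv : (Q.map Complex.ofReal) *ᵥ u = Sum.elim (0 : Fin k → ℂ) (μ • v) := by
      rw [hmap, hu, Matrix.fromBlocks_mulVec]
      rw [Sum.elim_comp_inl, Sum.elim_comp_inr]
      rw [hu0, Matrix.mulVec_neg, Matrix.mulVec_neg, Matrix.mulVec_mulVec, hmul00,
        Matrix.one_mulVec, neg_add_cancel, Matrix.mulVec_mulVec, Matrix.mulVec_mulVec,
        neg_add_eq_sub, e1]
    have hdom : u = 0 := by
      refine aux_dominance Q hoff x hxpos hQx u fun i hi => ?_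
      cases i with
      | inl a => exact ⟨0, by norm_num, by rw [hmv]; simp⟩
      | inr b =>
        refine ⟨μ, hre, ?_⟩
        rw [hmv]
        simp [hu]
    exact hv0 (funext fun b => congrFun hdom (Sum.inr b))
end
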